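/- For every function ψ : ℕ → ℤ and every natural number n, the number of pairs (x,y) ∈ [0,2^n)² such that ψ(x ⊕ y) = x + y is at most 3^n, where ⊕ denotes bitwise XOR (dyadic addition). -/
import Mathlib

lemma add_eq_xor_add_two_mul_and (x y : ℕ) : x + y = (x ^^^ y) + 2 * (x &&& y) := by
  induction x using Nat.strong_induction_on generalizing y with
  | _ x ih =>
    rcases Nat.eq_zero_or_pos x with h | h
    · subst h; simp
    · have IH := ih (x / 2) (Nat.div_lt_self h one_lt_two) (y / 2)
      have h1 : (x ^^^ y) / 2 = x / 2 ^^^ y / 2 := Nat.xor_div_two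
      have h2 : (x &&& y) / 2 = x / 2 &&& y / 2 := Nat.and_div_two
      have h3 := Nat.and_mod_two_eq_one (a := x) (b := y)
      have h4 := Nat.xor_mod_two_eq_one (a := x) (b := y)
      omega

lemma or_and_xor (x y : ℕ) : (x &&& (x ^^^ y)) ||| (x &&& y) = x := by
  apply Nat.eq_of_testBit_eq
  intro i
  simp only [Nat.testBit_or, Nat.testBit_and, Nat.testBit_xor]
  cases x.testBit i <;> cases y.testBit i <;> rfl

theorem stmt_0 (ψ : ℕ → ℤ) (n : ℕ) :
    ((Finset.range (2 ^ n) ×ˢ Finset.range (2 ^ n)).filter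
      (fun p : ℕ × ℕ => ψ (p.1 ^^^ p.2) = (p.1 : ℤ) + p.2)).card ≤ 3 ^ n := by
  classical
  have hcard : (Finset.univ : Finset (Fin n → Fin 3)).card = 3 ^ n := by
    simp
  rw [← hcard]
  apply Finset.card_le_card_of_injOn
    (fun p : ℕ × ℕ => fun i : Fin n =>
      if (p.1 &&& (p.1 ^^^ p.2)).testBit i then 2
      else if (p.1 ^^^ p.2).testBit i then 1 else 0)
  · intro p _; exact Finset.mem_univ _
  · intro p hp q hq hfeq
    simp only [Finset.mem_coe, Finset.mem_filter, Finset.mem_product, Finset.mem_range] at hp hq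
    obtain ⟨⟨hx1, hy1⟩, hψ1⟩ := hp
    obtain ⟨⟨hx2, hy2⟩, hψ2⟩ := hq
    obtain ⟨x, y⟩ := p
    obtain ⟨x', y'⟩ := q
    simp only at hx1 hy1 hψ1 hx2 hy2 hψ2 ⊢
    -- xor is below 2^n
    have hs1 : x ^^^ y < 2 ^ n := Nat.xor_lt_two_pow hx1 hy1
    have hs2 : x' ^^^ y' < 2 ^ n := Nat.xor_lt_two_pow hx2 hy2
    have hu1 : x &&& (x ^^^ y) < 2 ^ n := Nat.and_lt_two_pow _ hs1
    have hu2 : x' &&& (x' ^^^ y') < 2 ^ n := Nat.and_lt_two_pow _ hs2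
    have hbit : ∀ i : ℕ,
        ((x &&& (x ^^^ y)).testBit i = (x' &&& (x' ^^^ y')).testBit i) ∧
        ((x ^^^ y).testBit i = (x' ^^^ y').testBit i) := by
      intro i
      by_cases hi : i < n
      · have := congrFun hfeq ⟨i, hi⟩
        simp only at this
        have himp1 : (x &&& (x ^^^ y)).testBit i = true → (x ^^^ y).testBit i = true := by
          simp only [Nat.testBit_and]; intro h; exact (Bool.and_eq_true _ _ |>.mp h).2
        have himp2 : (x' &&& (x' ^^^ y')).testBit i = true → (x' ^^^ y').testBit i = true := by
          simp only [Nat.testBit_and]; intro h; exact (Bool.and_eq_true _ _ |>.mp h).2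
        rcases hb1 : (x &&& (x ^^^ y)).testBit i <;>
          rcases hb2 : (x ^^^ y).testBit i <;>
          rcases hb3 : (x' &&& (x' ^^^ y')).testBit i <;>
          rcases hb4 : (x' ^^^ y').testBit i <;>
          simp_all
      · have l1 : (x &&& (x ^^^ y)).testBit i = false :=
          Nat.testBit_lt_two_pow (lt_of_lt_of_le hu1 (Nat.pow_le_pow_right (by norm_num) (le_of_not_gt hi)))
        have l2 : (x' &&& (x' ^^^ y')).testBit i = false :=
          Nat.testBit_lt_two_pow (lt_of_lt_of_le hu2 (Nat.pow_le_pow_right (by norm_num) (le_of_not_gt hi)))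
        have l3 : (x ^^^ y).testBit i = false :=
          Nat.testBit_lt_two_pow (lt_of_lt_of_le hs1 (Nat.pow_le_pow_right (by norm_num) (le_of_not_gt hi)))
        have l4 : (x' ^^^ y').testBit i = false :=
          Nat.testBit_lt_two_pow (lt_of_lt_of_le hs2 (Nat.pow_le_pow_right (by norm_num) (le_of_not_gt hi)))
        exact ⟨by rw [l1, l2], by rw [l3, l4]⟩
    have hs : x ^^^ y = x' ^^^ y' := Nat.eq_of_testBit_eq fun i => (hbit i).2
    have hu : x &&& (x ^^^ y) = x' &&& (x' ^^^ y') := Nat.eq_of_testBit_eq fun i => (hbit i).1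
    -- equal sums
    have hsum : x + y = x' + y' := by
      have : ((x : ℤ) + y) = ((x' : ℤ) + y') := by rw [← hψ1, ← hψ2, hs]
      exact_mod_cast this
    -- equal carries
    have hand : x &&& y = x' &&& y' := by
      have e1 := add_eq_xor_add_two_mul_and x y
      have e2 := add_eq_xor_add_two_mul_and x' y'
      omega
    have hx : x = x' := by
      conv_lhs => rw [← or_and_xor x y]
      conv_rhs => rw [← or_and_xor x' y']
      rw [hu, hand]
    have hy : y = y' := by
      have h : x ^^^ (x ^^^ y) = x' ^^^ (x' ^^^ y') := by rw [hs, hx]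
      simpa [← Nat.xor_assoc] using h
    simp [hx, hy]
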